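/- The space of complex hypermatrices M_{N₁²…Nₙ²}(ℂ) ≅ M_{N₁}(ℂ) ⊗ ⋯ ⊗ M_{Nₙ}(ℂ), equipped for each subset γ ⊆ {1,…,n} with the product •_γ acting as matrix (convolution) product in levels belonging to γ and as Schur (entrywise) product in the remaining levels, the involution ⋆_γ acting as conjugate-transpose in levels of γ and entrywise conjugation elsewhere, and the norm ‖·‖_γ given by the tensor product of operator norms in levels of γ and max-norms elsewhere, is a C*-algebra for each γ; hence it is a hyper-C*-algebra with 2ⁿ C*-structures on the same complete topological vector space. -/

import Mathlib

set_option maxHeartbeats 1000000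
set_option synthInstance.maxHeartbeats 400000


/-! Complex hypermatrices as a hyper-C*-algebra: for every subset
`γ ⊆ {1,…,n}` of contracting levels, the product `•_γ` (matrix product in the
levels of `γ`, Schur product elsewhere), the involution `⋆_γ`
(conjugate-transpose in the levels of `γ`, entrywise conjugation elsewhere)
and the norm `‖·‖_γ` (operator norms in the levels of `γ`, max norms
elsewhere) give a C*-algebra structure on the same finite-dimensional space. -/

/-- The space of hypermatrices of depth `n` with levels of sizes `N 0,…,N (n-1)`. -/
abbrev HM {n : ℕ} (N : Fin n → ℕ) : Type :=
  (∀ i, Fin (N i)) → (∀ i, Fin (N i)) → ℂ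

/-- The product `•_γ`: contraction (matrix product) at the levels in `γ`,
Schur (entrywise) product at the remaining levels. -/
noncomputable def hmul {n : ℕ} (N : Fin n → ℕ) (γ : Finset (Fin n)) (x y : HM N) : HM N := fun u l =>
  ∑ o : ∀ k : { i // i ∈ γ }, Fin (N k.1),
    x u (fun i => if h : i ∈ γ then o ⟨i, h⟩ else l i) *
    y (fun i => if h : i ∈ γ then o ⟨i, h⟩ else u i) l

/-- The involution `⋆_γ`: conjugate-transpose at the levels in `γ`, entrywise
conjugation at the remaining levels. -/
def hstar {n : ℕ} (N : Fin n → ℕ) (γ : Finset (Fin n)) (x : HM N) : HM N := fun u l =>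
  starRingEnd ℂ (x (fun i => if i ∈ γ then l i else u i) (fun i => if i ∈ γ then u i else l i))

/-- The `γ`-hslice of a hypermatrix: the matrix indexed by the `γ`-levels
obtained by freezing the remaining upper indices at `u` and lower indices at
`l`. -/
def hslice {n : ℕ} (N : Fin n → ℕ) (γ : Finset (Fin n)) (x : HM N) (u l : ∀ i, Fin (N i)) :
    Matrix (∀ k : { i // i ∈ γ }, Fin (N k.1)) (∀ k : { i // i ∈ γ }, Fin (N k.1)) ℂ :=
  fun a b => x (fun i => if h : i ∈ γ then a ⟨i, h⟩ else u i)
    (fun i => if h : i ∈ γ then b ⟨i, h⟩ else l i)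

/-- The norm `‖·‖_γ`: the maximum (over the frozen non-`γ` indices) of the
operator norms of the `γ`-slices; i.e. the tensor product of the operator
norms at the levels in `γ` with the max norms at the remaining levels. -/
noncomputable def hnorm {n : ℕ} (N : Fin n → ℕ) (γ : Finset (Fin n)) (x : HM N) : ℝ :=
  sSup (Set.range fun p : (∀ i, Fin (N i)) × (∀ i, Fin (N i)) =>
    ‖Matrix.toEuclideanCLM (𝕜 := ℂ) (hslice N γ x p.1 p.2)‖)

/-! ### Auxiliary analytic lemmas about the `L²` operator norm -/

open Matrix in
lemma coord_le_norm' {m : Type*} [Fintype m] [DecidableEq m] (v : EuclideanSpace ℂ m) (i : m) :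
    ‖v i‖ ≤ ‖v‖ := by
  have h := norm_inner_le_norm (𝕜 := ℂ) (EuclideanSpace.single i (1 : ℂ)) v
  simpa [EuclideanSpace.inner_single_left] using h

open Matrix in
lemma norm_entry_le_clm' {m : Type*} [Fintype m] [DecidableEq m] (M : Matrix m m ℂ) (a b : m) :
    ‖M a b‖ ≤ ‖Matrix.toEuclideanCLM (𝕜 := ℂ) M‖ := by
  have h0 : Matrix.toEuclideanCLM (𝕜 := ℂ) M (EuclideanSpace.single b 1)
      = (WithLp.equiv 2 (m → ℂ)).symm (M *ᵥ Pi.single b 1) := by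
    rfl
  have h1 : ‖M a b‖ = ‖(Matrix.toEuclideanCLM (𝕜 := ℂ) M (EuclideanSpace.single b 1)) a‖ := by
    rw [h0]; simp [Matrix.mulVec_single, WithLp.equiv_symm_apply]
  rw [h1]
  have h2 : ‖(Matrix.toEuclideanCLM (𝕜 := ℂ) M (EuclideanSpace.single b 1)) a‖
      ≤ ‖Matrix.toEuclideanCLM (𝕜 := ℂ) M (EuclideanSpace.single b 1)‖ := coord_le_norm' _ _
  have h3 : ‖Matrix.toEuclideanCLM (𝕜 := ℂ) M (EuclideanSpace.single b 1)‖
      ≤ ‖Matrix.toEuclideanCLM (𝕜 := ℂ) M‖ * ‖EuclideanSpace.single b (1:ℂ)‖ :=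
    (Matrix.toEuclideanCLM (𝕜 := ℂ) M).le_opNorm _
  have h4 : ‖EuclideanSpace.single b (1:ℂ)‖ = 1 := by
    rw [EuclideanSpace.norm_single]; simp
  refine h2.trans (h3.trans ?_)
  rw [h4, mul_one]

open Matrix in
lemma clm_std_le' {m : Type*} [Fintype m] [DecidableEq m] (a b : m) :
    ‖Matrix.toEuclideanCLM (𝕜 := ℂ) (Matrix.single a b (1:ℂ))‖ ≤ 1 := by
  refine ContinuousLinearMap.opNorm_le_bound _ zero_le_one fun v => ?_
  rw [one_mul]
  have hv : Matrix.toEuclideanCLM (𝕜 := ℂ) (Matrix.single a b (1:ℂ)) v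
      = EuclideanSpace.single a (v b) := by
    have h := Matrix.ofLp_toEuclideanCLM (𝕜 := ℂ) (Matrix.single a b (1:ℂ)) v
    rw [← (WithLp.equiv 2 (m → ℂ)).symm_apply_apply
        (Matrix.toEuclideanCLM (𝕜 := ℂ) (Matrix.single a b (1:ℂ)) v), WithLp.equiv_apply, h,
      Matrix.single_mulVec, one_mul, EuclideanSpace.single]
    rfl
  rw [hv, EuclideanSpace.norm_single]
  exact coord_le_norm' v b

open Matrix in
lemma clm_norm_le_sum' {m : Type*} [Fintype m] [DecidableEq m] (M : Matrix m m ℂ) :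
    ‖Matrix.toEuclideanCLM (𝕜 := ℂ) M‖ ≤ ∑ a : m, ∑ b : m, ‖M a b‖ := by
  conv_lhs => rw [Matrix.matrix_eq_sum_single M]
  rw [map_sum]
  refine (norm_sum_le _ _).trans (Finset.sum_le_sum fun a _ => ?_)
  rw [map_sum]
  refine (norm_sum_le _ _).trans (Finset.sum_le_sum fun b _ => ?_)
  have h2 : Matrix.single a b (M a b) = M a b • Matrix.single a b (1:ℂ) := by
    ext i j
    simp only [Matrix.single, Matrix.smul_apply, Matrix.of_apply, smul_eq_mul]
    split_ifs <;> simp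
  rw [h2, _root_.map_smul]
  refine (norm_smul_le (M a b)
    (Matrix.toEuclideanCLM (𝕜 := ℂ) (Matrix.single a b (1:ℂ)))).trans ?_
  simpa using mul_le_mul_of_nonneg_left (clm_std_le' a b) (norm_nonneg (M a b))

/-! ### Slice lemmas -/

section Aux
open Matrix
variable {n : ℕ} {N : Fin n → ℕ} {γ : Finset (Fin n)}

lemma hslice_apply_self (x : HM N) (u l : ∀ i, Fin (N i)) :
    hslice N γ x u l (fun k => u k.1) (fun k => l k.1) = x u l := by
  simp [hslice]

lemma eq_of_hslice {x y : HM N}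
    (h : ∀ u l, hslice N γ x u l = hslice N γ y u l) : x = y := by
  funext u l
  have := congrFun (congrFun (h u l) (fun k => u k.1)) (fun k => l k.1)
  simpa [hslice_apply_self] using this

lemma hslice_hmul (x y : HM N) (u l : ∀ i, Fin (N i)) :
    hslice N γ (hmul N γ x y) u l = hslice N γ x u l * hslice N γ y u l := by
  funext a b
  simp only [hslice, hmul, Matrix.mul_apply]
  refine Finset.sum_congr rfl fun o _ => ?_
  congr 1
  · congr 1
    funext i; by_cases h : i ∈ γ <;> simp [h]
  · congr 1
    funext i; by_cases h : i ∈ γ <;> simp [h]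

lemma hslice_hstar (x : HM N) (u l : ∀ i, Fin (N i)) :
    hslice N γ (hstar N γ x) u l = (hslice N γ x u l)ᴴ := by
  funext a b
  simp only [hslice, hstar, Matrix.conjTranspose_apply, starRingEnd_apply]
  congr 1
  congr 1
  all_goals
    funext i; by_cases h : i ∈ γ <;> simp [h]

lemma hslice_add (x y : HM N) (u l : ∀ i, Fin (N i)) :
    hslice N γ (x + y) u l = hslice N γ x u l + hslice N γ y u l := rfl

lemma hslice_smul (c : ℂ) (x : HM N) (u l : ∀ i, Fin (N i)) :
    hslice N γ (c • x) u l = c • hslice N γ x u l := rfl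

lemma hslice_zero (u l : ∀ i, Fin (N i)) :
    hslice N γ (0 : HM N) u l = 0 := rfl

open Classical in
/-- The `γ`-unit hypermatrix. -/
noncomputable def hunit (N : Fin n → ℕ) (γ : Finset (Fin n)) : HM N := fun u l =>
  if ∀ i ∈ γ, u i = l i then 1 else 0

open Classical in
lemma hslice_hunit (u l : ∀ i, Fin (N i)) :
    hslice N γ (hunit N γ) u l = 1 := by
  funext a b
  simp only [hslice, hunit, Matrix.one_apply]
  by_cases h : a = b
  · subst h
    rw [if_pos rfl, if_pos]
    intro i hi; simp [hi]
  · rw [if_neg h, if_neg]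
    intro hc
    apply h
    funext k
    have := hc k.1 k.2
    simpa [k.2] using this

/-! ### Norm lemmas -/

/-- The family of slice norms whose supremum is `hnorm`. -/
noncomputable def hF (N : Fin n → ℕ) (γ : Finset (Fin n)) (x : HM N)
    (p : (∀ i, Fin (N i)) × (∀ i, Fin (N i))) : ℝ :=
  ‖Matrix.toEuclideanCLM (𝕜 := ℂ) (hslice N γ x p.1 p.2)‖

lemma hnorm_eq_sSup (x : HM N) : hnorm N γ x = sSup (Set.range (hF N γ x)) := rfl

lemma hF_le_hnorm (x : HM N) (p : (∀ i, Fin (N i)) × (∀ i, Fin (N i))) :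
    hF N γ x p ≤ hnorm N γ x :=
  le_csSup (Set.finite_range _).bddAbove (Set.mem_range_self p)

lemma hnorm_le {x : HM N} {a : ℝ} (ha : 0 ≤ a) (h : ∀ p, hF N γ x p ≤ a) :
    hnorm N γ x ≤ a :=
  Real.sSup_le (by rintro r ⟨p, rfl⟩; exact h p) ha

lemma hnorm_attained [Nonempty (∀ i, Fin (N i))] (x : HM N) :
    ∃ p, hnorm N γ x = hF N γ x p := by
  obtain ⟨p, hp⟩ := Set.Nonempty.csSup_mem (Set.range_nonempty (hF N γ x))
    (Set.finite_range _)
  exact ⟨p, hp.symm⟩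

lemma hnorm_nonneg [Nonempty (∀ i, Fin (N i))] (x : HM N) : 0 ≤ hnorm N γ x := by
  refine le_trans ?_ (hF_le_hnorm (γ := γ) x (Classical.arbitrary _))
  unfold hF
  exact norm_nonneg _

lemma hF_smul (c : ℂ) (x : HM N) (p : (∀ i, Fin (N i)) × (∀ i, Fin (N i))) :
    hF N γ (c • x) p = ‖c‖ * hF N γ x p := by
  unfold hF
  rw [hslice_smul, _root_.map_smul,
    norm_smul c (Matrix.toEuclideanCLM (𝕜 := ℂ) (hslice N γ x p.1 p.2))]

lemma hF_star_mul (x : HM N) (p : (∀ i, Fin (N i)) × (∀ i, Fin (N i))) :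
    hF N γ (hmul N γ (hstar N γ x) x) p = hF N γ x p ^ 2 := by
  unfold hF
  rw [hslice_hmul, hslice_hstar, ← Matrix.star_eq_conjTranspose, _root_.map_mul, map_star, sq]
  exact CStarRing.norm_star_mul_self
    (x := Matrix.toEuclideanCLM (𝕜 := ℂ) (hslice N γ x p.1 p.2))

lemma norm_xentry_le (x : HM N) (u l : ∀ i, Fin (N i)) :
    ‖x u l‖ ≤ hnorm N γ x := by
  rw [← hslice_apply_self (γ := γ) x u l]
  exact (norm_entry_le_clm' _ _ _).trans (hF_le_hnorm x (u, l))

end Aux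

theorem hypermatrices_hyper_cstar_algebra {n : ℕ} (N : Fin n → ℕ) :
    ∀ γ : Finset (Fin n),
      -- associative unital ℂ-algebra structure:
      (∀ x y z : HM N, hmul N γ (hmul N γ x y) z = hmul N γ x (hmul N γ y z)) ∧
      (∃ e : HM N, ∀ x : HM N, hmul N γ e x = x ∧ hmul N γ x e = x) ∧
      (∀ x y z : HM N, hmul N γ x (y + z) = hmul N γ x y + hmul N γ x z) ∧
      (∀ x y z : HM N, hmul N γ (x + y) z = hmul N γ x z + hmul N γ y z) ∧
      (∀ (c : ℂ) (x y : HM N), hmul N γ (c • x) y = c • hmul N γ x y) ∧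
      (∀ (c : ℂ) (x y : HM N), hmul N γ x (c • y) = c • hmul N γ x y) ∧
      -- involution:
      (∀ x : HM N, hstar N γ (hstar N γ x) = x) ∧
      (∀ x y : HM N, hstar N γ (hmul N γ x y) = hmul N γ (hstar N γ y) (hstar N γ x)) ∧
      (∀ (c : ℂ) (x y : HM N),
        hstar N γ (c • x + y) = (starRingEnd ℂ c) • hstar N γ x + hstar N γ y) ∧
      -- C*-norm:
      (∀ x : HM N, 0 ≤ hnorm N γ x) ∧
      (∀ x : HM N, hnorm N γ x = 0 ↔ x = 0) ∧
      (∀ x y : HM N, hnorm N γ (x + y) ≤ hnorm N γ x + hnorm N γ y) ∧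
      (∀ (c : ℂ) (x : HM N), hnorm N γ (c • x) = ‖c‖ * hnorm N γ x) ∧
      (∀ x y : HM N, hnorm N γ (hmul N γ x y) ≤ hnorm N γ x * hnorm N γ y) ∧
      (∀ x : HM N, hnorm N γ (hmul N γ (hstar N γ x) x) = hnorm N γ x ^ 2) ∧
      -- all the norms are equivalent:
      (∀ γ' : Finset (Fin n), ∃ C : ℝ, 0 < C ∧ ∀ x : HM N,
        hnorm N γ x ≤ C * hnorm N γ' x) := by
  intro γ
  have hassoc : ∀ x y z : HM N, hmul N γ (hmul N γ x y) z = hmul N γ x (hmul N γ y z) :=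
    fun x y z => eq_of_hslice fun u l => by
      rw [hslice_hmul, hslice_hmul, hslice_hmul, hslice_hmul, mul_assoc]
  have hunit' : ∃ e : HM N, ∀ x : HM N, hmul N γ e x = x ∧ hmul N γ x e = x :=
    ⟨hunit N γ, fun x =>
      ⟨eq_of_hslice fun u l => by rw [hslice_hmul, hslice_hunit, one_mul],
       eq_of_hslice fun u l => by rw [hslice_hmul, hslice_hunit, mul_one]⟩⟩
  have hld : ∀ x y z : HM N, hmul N γ x (y + z) = hmul N γ x y + hmul N γ x z :=
    fun x y z => eq_of_hslice fun u l => by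
      rw [hslice_hmul, hslice_add, hslice_add, hslice_hmul, hslice_hmul, mul_add]
  have hrd : ∀ x y z : HM N, hmul N γ (x + y) z = hmul N γ x z + hmul N γ y z :=
    fun x y z => eq_of_hslice fun u l => by
      rw [hslice_hmul, hslice_add, hslice_add, hslice_hmul, hslice_hmul, add_mul]
  have hsl : ∀ (c : ℂ) (x y : HM N), hmul N γ (c • x) y = c • hmul N γ x y :=
    fun c x y => eq_of_hslice fun u l => by
      rw [hslice_hmul, hslice_smul, hslice_smul, hslice_hmul, smul_mul_assoc]
  have hsr : ∀ (c : ℂ) (x y : HM N), hmul N γ x (c • y) = c • hmul N γ x y :=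
    fun c x y => eq_of_hslice fun u l => by
      rw [hslice_hmul, hslice_smul, hslice_smul, hslice_hmul, mul_smul_comm]
  have hss : ∀ x : HM N, hstar N γ (hstar N γ x) = x :=
    fun x => eq_of_hslice fun u l => by
      rw [hslice_hstar, hslice_hstar, Matrix.conjTranspose_conjTranspose]
  have hsm : ∀ x y : HM N, hstar N γ (hmul N γ x y) = hmul N γ (hstar N γ y) (hstar N γ x) :=
    fun x y => eq_of_hslice fun u l => by
      rw [hslice_hstar, hslice_hmul, Matrix.conjTranspose_mul, hslice_hmul,
        hslice_hstar, hslice_hstar]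
  have hsa : ∀ (c : ℂ) (x y : HM N),
      hstar N γ (c • x + y) = (starRingEnd ℂ c) • hstar N γ x + hstar N γ y :=
    fun c x y => eq_of_hslice fun u l => by
      rw [hslice_hstar, hslice_add, hslice_smul, Matrix.conjTranspose_add,
        Matrix.conjTranspose_smul, hslice_add, hslice_smul, hslice_hstar, hslice_hstar,
        starRingEnd_apply]
  by_cases hne : Nonempty (∀ i, Fin (N i))
  · haveI := hne
    have hnn : ∀ x : HM N, 0 ≤ hnorm N γ x := fun x => hnorm_nonneg x
    have hzero : ∀ x : HM N, hnorm N γ x = 0 ↔ x = 0 := by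
      intro x
      constructor
      · intro h
        refine eq_of_hslice (γ := γ) fun u l => ?_
        have h1 : hF N γ x (u, l) ≤ 0 := h ▸ hF_le_hnorm x (u, l)
        have h2 : ‖Matrix.toEuclideanCLM (𝕜 := ℂ) (hslice N γ x u l)‖ = 0 :=
          le_antisymm h1 (norm_nonneg _)
        have h3 := norm_eq_zero.mp h2
        have h4 := (Matrix.toEuclideanCLM (𝕜 := ℂ)).injective (h3.trans (map_zero _).symm)
        exact h4.trans (hslice_zero u l).symm
      · rintro rfl
        refine le_antisymm (hnorm_le le_rfl fun p => ?_) (hnn 0)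
        show ‖Matrix.toEuclideanCLM (𝕜 := ℂ) (hslice N γ (0 : HM N) p.1 p.2)‖ ≤ 0
        rw [hslice_zero, map_zero, norm_zero]
    have htri : ∀ x y : HM N, hnorm N γ (x + y) ≤ hnorm N γ x + hnorm N γ y := fun x y =>
      hnorm_le (add_nonneg (hnn x) (hnn y)) fun p => by
        show ‖Matrix.toEuclideanCLM (𝕜 := ℂ) (hslice N γ (x + y) p.1 p.2)‖ ≤ _
        rw [hslice_add, map_add]
        exact (norm_add_le _ _).trans (add_le_add (hF_le_hnorm x p) (hF_le_hnorm y p))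
    have hsmul : ∀ (c : ℂ) (x : HM N), hnorm N γ (c • x) = ‖c‖ * hnorm N γ x := by
      intro c x
      obtain ⟨p0, hp0⟩ := hnorm_attained (γ := γ) x
      refine le_antisymm (hnorm_le (mul_nonneg (norm_nonneg c) (hnn x)) fun p => ?_) ?_
      · rw [hF_smul]
        exact mul_le_mul_of_nonneg_left (hF_le_hnorm x p) (norm_nonneg c)
      · have h := hF_le_hnorm (γ := γ) (c • x) p0
        rw [hF_smul, ← hp0] at h
        exact h
    have hmuln : ∀ x y : HM N, hnorm N γ (hmul N γ x y) ≤ hnorm N γ x * hnorm N γ y :=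
      fun x y =>
      hnorm_le (mul_nonneg (hnn x) (hnn y)) fun p => by
        show ‖Matrix.toEuclideanCLM (𝕜 := ℂ) (hslice N γ (hmul N γ x y) p.1 p.2)‖ ≤ _
        rw [hslice_hmul, _root_.map_mul]
        exact (norm_mul_le _ _).trans
          (mul_le_mul (hF_le_hnorm x p) (hF_le_hnorm y p) (norm_nonneg _) (hnn x))
    have hcstar : ∀ x : HM N, hnorm N γ (hmul N γ (hstar N γ x) x) = hnorm N γ x ^ 2 := by
      intro x
      obtain ⟨p0, hp0⟩ := hnorm_attained (γ := γ) x
      refine le_antisymm (hnorm_le (pow_nonneg (hnn x) 2) fun p => ?_) ?_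
      · rw [hF_star_mul]
        exact pow_le_pow_left₀ (norm_nonneg _) (hF_le_hnorm x p) 2
      · have h := hF_le_hnorm (γ := γ) (hmul N γ (hstar N γ x) x) p0
        rw [hF_star_mul, ← hp0] at h
        exact h
    have hequiv : ∀ γ' : Finset (Fin n), ∃ C : ℝ, 0 < C ∧ ∀ x : HM N,
        hnorm N γ x ≤ C * hnorm N γ' x := by
      intro γ'
      haveI : Nonempty (∀ k : { i // i ∈ γ }, Fin (N k.1)) :=
        ⟨fun k => Classical.arbitrary (∀ i, Fin (N i)) k.1⟩
      have hcard : (0 : ℝ) < (Fintype.card (∀ k : { i // i ∈ γ }, Fin (N k.1)) : ℝ) :=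
        Nat.cast_pos.mpr Fintype.card_pos
      refine ⟨(Fintype.card (∀ k : { i // i ∈ γ }, Fin (N k.1)) : ℝ) ^ 2,
        pow_pos hcard 2, fun x => ?_⟩
      refine hnorm_le (mul_nonneg (le_of_lt (pow_pos hcard 2)) (hnorm_nonneg x)) fun p => ?_
      show ‖Matrix.toEuclideanCLM (𝕜 := ℂ) (hslice N γ x p.1 p.2)‖ ≤ _
      refine (clm_norm_le_sum' _).trans ?_
      calc ∑ a, ∑ b, ‖hslice N γ x p.1 p.2 a b‖
          ≤ ∑ _a : (∀ k : { i // i ∈ γ }, Fin (N k.1)),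
              ∑ _b : (∀ k : { i // i ∈ γ }, Fin (N k.1)), hnorm N γ' x :=
            Finset.sum_le_sum fun a _ => Finset.sum_le_sum fun b _ =>
              norm_xentry_le (γ := γ') x _ _
        _ = (Fintype.card (∀ k : { i // i ∈ γ }, Fin (N k.1)) : ℝ) ^ 2 * hnorm N γ' x := by
            simp only [Finset.sum_const, Finset.card_univ, nsmul_eq_mul]
            ring
    exact ⟨hassoc, hunit', hld, hrd, hsl, hsr, hss, hsm, hsa, hnn, hzero, htri, hsmul,
      hmuln, hcstar, hequiv⟩
  · haveI hE : IsEmpty (∀ i, Fin (N i)) := not_nonempty_iff.mp hne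
    have h0 : ∀ (δ : Finset (Fin n)) (x : HM N), hnorm N δ x = 0 := by
      intro δ x
      unfold hnorm
      rw [Set.range_eq_empty, Real.sSup_empty]
    have hsub : ∀ x y : HM N, x = y := fun x y => funext fun u => hE.elim u
    refine ⟨hassoc, hunit', hld, hrd, hsl, hsr, hss, hsm, hsa,
      fun x => le_of_eq (h0 γ x).symm,
      fun x => ⟨fun _ => hsub x 0, fun _ => h0 γ x⟩,
      fun x y => by rw [h0, h0, h0]; norm_num,
      fun c x => by rw [h0, h0, mul_zero],
      fun x y => by rw [h0, h0, h0]; norm_num,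
      fun x => by rw [h0, h0]; norm_num,
      fun γ' => ⟨1, one_pos, fun x => by rw [h0, h0]; norm_num⟩⟩
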